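/- (Presentation of the infinite dihedral reflection group) Let s_0, s_1 : ℝ → ℝ be the bijections s_0(x) = −x and s_1(x) = 2 − x, regarded as elements of the permutation group of ℝ. Let D be the group presented by two generators a, b subject only to the relations a^2 = 1 and b^2 = 1. Then the group homomorphism D → Perm(ℝ) induced by a ↦ s_0 and b ↦ s_1 is injective; its image is the subgroup generated by s_0 and s_1. -/

import Mathlib

/-- The affine reflection of `ℝ` in the integer `n`: the bijection `x ↦ 2n − x`,
regarded as an element of the permutation group of `ℝ`. -/
def affRefl (n : ℤ) : Equiv.Perm ℝ :=
  Function.Involutive.toPerm (fun x => 2 * (n : ℝ) - x)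
    (fun x => by show 2 * (n : ℝ) - (2 * (n : ℝ) - x) = x; ring)

/-- Relations of the infinite dihedral group: `a² = 1` and `b² = 1` in the free group on
two generators. -/
def infDihedralRels : Set (FreeGroup (Fin 2)) :=
  {(FreeGroup.of 0) ^ 2, (FreeGroup.of 1) ^ 2}

namespace InfDihAux

@[simp] lemma affRefl_apply (n : ℤ) (x : ℝ) : affRefl n x = 2 * (n : ℝ) - x := rfl

lemma affRefl_sq (n : ℤ) : affRefl n ^ 2 = 1 := by
  ext x
  simp [sq, affRefl_apply]

noncomputable def f : Fin 2 → Equiv.Perm ℝ := ![affRefl 0, affRefl 1]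

lemma hrels : ∀ r ∈ infDihedralRels, FreeGroup.lift f r = 1 := by
  intro r hr
  rcases hr with h | h <;> subst h <;>
    simp [f, affRefl_sq]

noncomputable def φ : PresentedGroup infDihedralRels →* Equiv.Perm ℝ :=
  PresentedGroup.toGroup hrels

lemma φ_of0 : φ (PresentedGroup.of 0) = affRefl 0 := by
  rw [show φ (PresentedGroup.of 0) = f 0 from PresentedGroup.toGroup.of hrels]; simp [f]

lemma φ_of1 : φ (PresentedGroup.of 1) = affRefl 1 := by
  rw [show φ (PresentedGroup.of 1) = f 1 from PresentedGroup.toGroup.of hrels]; simp [f]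

noncomputable abbrev a : PresentedGroup infDihedralRels := PresentedGroup.of 0
noncomputable abbrev b : PresentedGroup infDihedralRels := PresentedGroup.of 1

lemma sq_one (i : Fin 2) : (PresentedGroup.of i : PresentedGroup infDihedralRels) ^ 2 = 1 := by
  have : (PresentedGroup.mk infDihedralRels) ((FreeGroup.of i) ^ 2) = 1 := by
    refine (QuotientGroup.eq_one_iff _).mpr (Subgroup.subset_normalClosure ?_)
    fin_cases i
    · exact Or.inl rfl
    · exact Or.inr rfl
  simp at this; exact this

lemma a_sq : a * a = 1 := by have := sq_one 0; rwa [sq] at this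
lemma b_sq : b * b = 1 := by have := sq_one 1; rwa [sq] at this
lemma a_inv : a⁻¹ = a := by rw [inv_eq_iff_mul_eq_one, a_sq]
lemma b_inv : b⁻¹ = b := by rw [inv_eq_iff_mul_eq_one, b_sq]

noncomputable abbrev t : PresentedGroup infDihedralRels := a * b

lemma conj_t : a * t * a⁻¹ = t⁻¹ := by
  rw [mul_inv_rev, a_inv, b_inv, t]
  rw [show a * (a * b) * a = (a * a) * (b * a) by group, a_sq, one_mul]

lemma conj_t_zpow (n : ℤ) : a * t ^ n * a⁻¹ = (t ^ n)⁻¹ := by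
  have h := map_zpow (MulAut.conj a) t n
  simp only [MulAut.conj_apply] at h
  rw [h, conj_t, inv_zpow]

lemma a_mul_t_zpow (n : ℤ) : a * t ^ n = (t ^ n)⁻¹ * a := by
  have h := conj_t_zpow n
  rw [a_inv] at h
  calc a * t ^ n = (a * t ^ n * a) * a := by rw [mul_assoc, a_sq, mul_one]
    _ = (t ^ n)⁻¹ * a := by rw [h]

/-- Normal form: every element of the presented group is `t^n` or `t^n * a`. -/
lemma normal_form (g : PresentedGroup infDihedralRels) :
    ∃ n : ℤ, g = t ^ n ∨ g = t ^ n * a := by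
  have hg : g ∈ Subgroup.closure (Set.range (PresentedGroup.of : Fin 2 → _)) := by
    rw [PresentedGroup.closure_range_of]; trivial
  induction hg using Subgroup.closure_induction with
  | mem x hx =>
    obtain ⟨i, rfl⟩ := hx
    fin_cases i
    · refine ⟨0, Or.inr ?_⟩
      rw [zpow_zero, one_mul]
      rfl
    · refine ⟨-1, Or.inr ?_⟩
      show b = t ^ (-1 : ℤ) * a
      rw [zpow_neg_one, show t⁻¹ = b⁻¹ * a⁻¹ by group, b_inv, a_inv, mul_assoc, a_sq, mul_one]
  | one => exact ⟨0, Or.inl (by rw [zpow_zero])⟩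
  | mul x y _ _ hx hy =>
    obtain ⟨n, hn | hn⟩ := hx <;> obtain ⟨m, hm | hm⟩ := hy <;> subst hn hm
    · exact ⟨n + m, Or.inl (by rw [zpow_add])⟩
    · exact ⟨n + m, Or.inr (by rw [zpow_add, mul_assoc])⟩
    · refine ⟨n - m, Or.inr ?_⟩
      calc t ^ n * a * t ^ m = t ^ n * (a * t ^ m) := by group
        _ = t ^ n * ((t ^ m)⁻¹ * a) := by rw [a_mul_t_zpow]
        _ = t ^ (n - m) * a := by group
    · refine ⟨n - m, Or.inl ?_⟩
      calc t ^ n * a * (t ^ m * a) = t ^ n * (a * t ^ m) * a := by group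
        _ = t ^ n * ((t ^ m)⁻¹ * a) * a := by rw [a_mul_t_zpow]
        _ = t ^ (n - m) * (a * a) := by group
        _ = t ^ (n - m) := by rw [a_sq, mul_one]
  | inv x _ hx =>
    obtain ⟨n, hn | hn⟩ := hx <;> subst hn
    · exact ⟨-n, Or.inl (by rw [zpow_neg])⟩
    · refine ⟨n, Or.inr ?_⟩
      calc (t ^ n * a)⁻¹ = a⁻¹ * (t ^ n)⁻¹ := by group
        _ = a * t ^ (-n) := by rw [a_inv, zpow_neg]
        _ = (t ^ (-n))⁻¹ * a := a_mul_t_zpow (-n)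
        _ = t ^ n * a := by group

noncomputable abbrev T : Equiv.Perm ℝ := affRefl 0 * affRefl 1

lemma φ_t : φ t = T := by
  rw [t, map_mul, φ_of0, φ_of1]

lemma T_apply (x : ℝ) : T x = x - 2 := by
  rw [Equiv.Perm.mul_apply, affRefl_apply, affRefl_apply]; push_cast; ring

lemma T_inv_apply (x : ℝ) : T⁻¹ x = x + 2 := by
  have h : T (x + 2) = x := by rw [T_apply]; ring
  nth_rewrite 1 [← h]
  rw [← Equiv.Perm.mul_apply, inv_mul_cancel, Equiv.Perm.one_apply]

lemma T_zpow_apply (n : ℤ) : ∀ x : ℝ, (T ^ n) x = x - 2 * n := by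
  induction n using Int.induction_on with
  | zero => intro x; simp
  | succ k ih =>
    intro x
    rw [show ((k : ℤ) + 1) = (k + 1 : ℤ) from rfl, zpow_add_one, Equiv.Perm.mul_apply,
      T_apply, ih]
    push_cast; ring
  | pred k ih =>
    intro x
    rw [sub_eq_add_neg, zpow_add, zpow_neg_one, Equiv.Perm.mul_apply, T_inv_apply, ih]
    push_cast; ring

lemma φ_injective : Function.Injective φ := by
  rw [injective_iff_map_eq_one]
  intro g hg
  obtain ⟨n, hn | hn⟩ := normal_form g <;> subst hn
  · have h0 : ((φ (t ^ n)) : Equiv.Perm ℝ) (0 : ℝ) = 0 := by rw [hg]; rfl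
    rw [map_zpow, φ_t, T_zpow_apply] at h0
    have : (n : ℝ) = 0 := by linarith
    have hn0 : n = 0 := by exact_mod_cast this
    rw [hn0, zpow_zero]
  · exfalso
    have h1 : ((φ (t ^ n * a)) : Equiv.Perm ℝ) (0 : ℝ) = 0 := by rw [hg]; rfl
    have h2 : ((φ (t ^ n * a)) : Equiv.Perm ℝ) (1 : ℝ) = 1 := by rw [hg]; rfl
    rw [map_mul, map_zpow, φ_t, φ_of0, Equiv.Perm.mul_apply, affRefl_apply,
      T_zpow_apply] at h1 h2
    push_cast at h1 h2
    linarith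

lemma φ_range : φ.range = Subgroup.closure {affRefl 0, affRefl 1} := by
  rw [MonoidHom.range_eq_map, ← PresentedGroup.closure_range_of infDihedralRels,
    MonoidHom.map_closure]
  congr 1
  ext x
  constructor
  · rintro ⟨y, ⟨i, rfl⟩, rfl⟩
    fin_cases i
    · exact Or.inl φ_of0
    · exact Or.inr φ_of1
  · rintro (h | h)
    · exact ⟨PresentedGroup.of 0, ⟨0, rfl⟩, h ▸ φ_of0⟩
    · exact ⟨PresentedGroup.of 1, ⟨1, rfl⟩, h ▸ φ_of1⟩

end InfDihAux

/-- (Presentation of the infinite dihedral reflection group) Let `s_0(x) = −x` and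
`s_1(x) = 2 − x` in `Perm ℝ`, and let `D = ⟨a, b ∣ a² = b² = 1⟩`.  The homomorphism
`D → Perm ℝ` induced by `a ↦ s_0`, `b ↦ s_1` is injective, and its image is the subgroup
generated by `s_0` and `s_1`. -/
theorem stmt_14 :
    ∃ φ : PresentedGroup infDihedralRels →* Equiv.Perm ℝ,
      φ (PresentedGroup.of 0) = affRefl 0 ∧
      φ (PresentedGroup.of 1) = affRefl 1 ∧
      Function.Injective φ ∧
      φ.range = Subgroup.closure {affRefl 0, affRefl 1} := by
  exact ⟨InfDihAux.φ, InfDihAux.φ_of0, InfDihAux.φ_of1, InfDihAux.φ_injective,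
    InfDihAux.φ_range⟩
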